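/- Let ℓ ≥ 3 be an integer and let H_{2,ℓ} be the graph described in the context. Then for every choice of vertices x_i ∈ {t_{i,1}, t_{i,2}} for i = 2,…,ℓ−1, the set {t_{1,1}, w, x_2,…,x_{ℓ−1}} is a total dominating set of H_{2,ℓ} of cardinality ℓ. -/
import Mathlib


/-- The three special vertices `u`, `v`, `w`. -/
inductive UVW : Type
  | u | v | w
deriving DecidableEq

/-- Vertices of `H_{2,ℓ}`: triangle vertices `t_{i,j}` as `Sum.inl (i,j)`
(0-indexed), plus `u`, `v`, `w`. -/
abbrev H2lV (l : ℕ) := (Fin (l - 1) × Fin 3) ⊕ UVW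

/-- Edge relation of `H_{2,ℓ}`: triangles on each `t_{i,·}`; edges `uv`, `uw`;
`v` adjacent to every `t_{i,j}`; `u` adjacent to `t_{1,1}` (0-indexed `(0,0)`)
and to all `t_{i,j}` with `i ≥ 2` (0-indexed `1 ≤ i.val`); `w` adjacent to
`t_{1,1}` and to `t_{i,1}`, `t_{i,2}` (0-indexed `j ∈ {0,1}`) for `i ≥ 2`;
`v` and `w` nonadjacent. -/
def H2lRel (l : ℕ) : H2lV l → H2lV l → Prop
  | .inl p, .inl q => p.1 = q.1
  | .inr .u, .inl p => (p.1.val = 0 ∧ p.2.val = 0) ∨ 1 ≤ p.1.val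
  | .inr .v, .inl _ => True
  | .inr .w, .inl p =>
      (p.1.val = 0 ∧ p.2.val = 0) ∨ (1 ≤ p.1.val ∧ (p.2.val = 0 ∨ p.2.val = 1))
  | .inr .u, .inr .v => True
  | .inr .u, .inr .w => True
  | _, _ => False

/-- The graph `H_{2,ℓ}`. -/
def H2l (l : ℕ) : SimpleGraph (H2lV l) := SimpleGraph.fromRel (H2lRel l)

/-- `D` is a total dominating set of `G`. -/
def IsTotalDomSet {V : Type*} (G : SimpleGraph V) (D : Finset V) : Prop :=
  ∀ v : V, ∃ d ∈ D, G.Adj v d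

/-- For every choice `x_i ∈ {t_{i,1}, t_{i,2}}` for `i = 2, …, ℓ-1` (0-indexed
`1 ≤ i.val`), the set `{t_{1,1}, w, x_2, …, x_{ℓ-1}}` is a total dominating
set of `H_{2,ℓ}` of cardinality `ℓ`. -/
theorem stmt12 (l : ℕ) (hl : 3 ≤ l)
    (c : Fin (l - 1) → Fin 3) (hc : ∀ i, 1 ≤ i.val → (c i).val = 0 ∨ (c i).val = 1)
    (D : Finset (H2lV l))
    (hDdef : D = insert (Sum.inl ((⟨0, by omega⟩ : Fin (l - 1)), 0))
      (insert (Sum.inr UVW.w)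
        (Finset.image (fun i => Sum.inl (i, c i))
          (Finset.univ.filter (fun i : Fin (l - 1) => 1 ≤ i.val))))) :
    IsTotalDomSet (H2l l) D ∧ D.card = l := by
  subst hDdef
  constructor
  · intro x
    have hmem0 : (Sum.inl ((⟨0, by omega⟩ : Fin (l - 1)), 0) : H2lV l) ∈
        insert (Sum.inl ((⟨0, by omega⟩ : Fin (l - 1)), 0))
          (insert (Sum.inr UVW.w)
            (Finset.image (fun i => Sum.inl (i, c i))
              (Finset.univ.filter (fun i : Fin (l - 1) => 1 ≤ i.val)))) :=
      Finset.mem_insert_self _ _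
    have hmemw : (Sum.inr UVW.w : H2lV l) ∈
        insert (Sum.inl ((⟨0, by omega⟩ : Fin (l - 1)), 0))
          (insert (Sum.inr UVW.w)
            (Finset.image (fun i => Sum.inl (i, c i))
              (Finset.univ.filter (fun i : Fin (l - 1) => 1 ≤ i.val)))) := by
      simp
    match x with
    | Sum.inr UVW.u =>
        exact ⟨_, hmem0, by simp [H2l, H2lRel, SimpleGraph.fromRel_adj]⟩
    | Sum.inr UVW.v =>
        exact ⟨_, hmem0, by simp [H2l, H2lRel, SimpleGraph.fromRel_adj]⟩
    | Sum.inr UVW.w =>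
        exact ⟨_, hmem0, by simp [H2l, H2lRel, SimpleGraph.fromRel_adj]⟩
    | Sum.inl (i, j) =>
      rcases Nat.eq_zero_or_pos i.val with hi | hi
      · rcases Nat.eq_zero_or_pos j.val with hj | hj
        · refine ⟨_, hmemw, ?_⟩
          simp only [H2l, SimpleGraph.fromRel_adj]
          exact ⟨by simp, Or.inr (Or.inl ⟨hi, hj⟩)⟩
        · refine ⟨_, hmem0, ?_⟩
          simp only [H2l, SimpleGraph.fromRel_adj]
          constructor
          · simp only [ne_eq, Sum.inl.injEq, Prod.mk.injEq, not_and]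
            intro _ hjj
            apply absurd (congrArg Fin.val hjj)
            simp; omega
          · left
            show i = ⟨0, by omega⟩
            exact Fin.ext hi
      · by_cases hj : j = c i
        · refine ⟨_, hmemw, ?_⟩
          simp only [H2l, SimpleGraph.fromRel_adj]
          refine ⟨by simp, Or.inr (Or.inr ⟨hi, ?_⟩)⟩
          rw [hj]; exact hc i hi
        · refine ⟨Sum.inl (i, c i), ?_, ?_⟩
          · refine Finset.mem_insert_of_mem (Finset.mem_insert_of_mem ?_)
            simp only [Finset.mem_image, Finset.mem_filter, Finset.mem_univ, true_and]
            exact ⟨i, hi, rfl⟩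
          · simp only [H2l, SimpleGraph.fromRel_adj]
            refine ⟨?_, Or.inl rfl⟩
            simp only [ne_eq, Sum.inl.injEq, Prod.mk.injEq, not_and]
            exact fun _ => hj
  · have h1 : (Finset.univ.filter (fun i : Fin (l - 1) => 1 ≤ i.val)).card = l - 2 := by
      have : (Finset.univ.filter (fun i : Fin (l - 1) => 1 ≤ i.val)) =
          Finset.univ.erase (⟨0, by omega⟩ : Fin (l - 1)) := by
        ext i
        simp [Fin.ext_iff]
        omega
      rw [this, Finset.card_erase_of_mem (Finset.mem_univ _)]
      simp
      omega
    have hinj : Function.Injective (fun i : Fin (l - 1) => (Sum.inl (i, c i) : H2lV l)) := by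
      intro a b h
      simp only [Sum.inl.injEq, Prod.mk.injEq] at h
      exact h.1
    rw [Finset.card_insert_of_notMem, Finset.card_insert_of_notMem,
      Finset.card_image_of_injective _ hinj, h1]
    · omega
    · simp
    · simp only [Finset.mem_insert, Finset.mem_image, Finset.mem_filter, Finset.mem_univ,
        true_and, not_or, not_exists, not_and]
      refine ⟨by simp, fun i hi h => ?_⟩
      simp only [Sum.inl.injEq, Prod.mk.injEq] at h
      have := congrArg Fin.val h.1
      simp at this
      omega
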